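/- Let (I_1,…,I_r), (I'_1,…,I'_r) and (J_1,…,J_q), (J'_1,…,J'_q) be sequences of weakly increasing tuples with entries in {1,…,n}, with |I_k| = |I'_k| for all k and |J_k| = |J'_k| for all k. Suppose that either (a) there exists B ∈ ℝ such that ∏_{k=1}^r per(A_{I_k,I'_k}) ≤ B·∏_{k=1}^q per(A_{J_k,J'_k}) for every totally positive n×n matrix A, or (b) there exists b > 0 such that ∏_{k=1}^r per(A_{I_k,I'_k}) ≥ b·∏_{k=1}^q per(A_{J_k,J'_k}) for every totally positive n×n matrix A. Then for each i ∈ {1,…,n}, the total number of entries equal to i among I_1,…,I_r equals the total number of entries equal to i among J_1,…,J_q, and the total number of entries equal to i among I'_1,…,I'_r equals the total number of entries equal to i among J'_1,…,J'_q (i.e., I_1 ⊎ ⋯ ⊎ I_r = J_1 ⊎ ⋯ ⊎ J_q and I'_1 ⊎ ⋯ ⊎ I'_r = J'_1 ⊎ ⋯ ⊎ J'_q as multisets). -/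

import Mathlib

open Matrix BigOperators

/-- The permanent of a square real matrix. -/
def per {r : ℕ} (B : Matrix (Fin r) (Fin r) ℝ) : ℝ :=
  ∑ σ : Equiv.Perm (Fin r), ∏ i, B i (σ i)

/-- An `n × n` real matrix is totally positive if all its minors are positive. -/
def TotallyPos {n : ℕ} (A : Matrix (Fin n) (Fin n) ℝ) : Prop :=
  ∀ (k : ℕ) (f g : Fin k → Fin n), StrictMono f → StrictMono g →
    0 < (A.submatrix f g).det

lemma cauchy_det_pos : ∀ (m : ℕ) (x y : Fin m → ℝ), StrictMono x → StrictMono y →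
    (∀ i j, 0 < x i + y j) → 0 < (Matrix.of fun i j => (x i + y j)⁻¹).det := by
  intro m
  induction m with
  | zero => intro x y _ _ _; simp [Matrix.det_fin_zero]
  | succ n ih =>
    intro x y hx hy hxy
    have hne : ∀ i j, x i + y j ≠ 0 := fun i j => (hxy i j).ne'
    set C : Matrix (Fin (n+1)) (Fin (n+1)) ℝ := Matrix.of fun i j => (x i + y j)⁻¹ with hC
    set E : Matrix (Fin (n+1)) (Fin (n+1)) ℝ := Matrix.of fun i j =>
      if j = 0 then (x i + y 0)⁻¹ else (y 0 - y j) * ((x i + y j)⁻¹ * (x i + y 0)⁻¹) with hE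
    have h1 : C.det = E.det := by
      rw [← Matrix.det_transpose C, ← Matrix.det_transpose E]
      apply Matrix.det_eq_of_forall_row_eq_smul_add_const
        (fun j => if j = 0 then (0:ℝ) else 1) 0 (by simp)
      intro j i
      simp only [Matrix.transpose_apply, hC, hE, Matrix.of_apply]
      by_cases hj : j = 0
      · simp [hj]
      · simp only [if_neg hj, reduceIte]
        have ha := hne i j
        have hb := hne i 0
        field_simp
        ring
    set F : Matrix (Fin (n+1)) (Fin (n+1)) ℝ := Matrix.of fun i j =>
      if j = 0 then 1 else (y 0 - y j) * (x i + y j)⁻¹ with hF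
    have h2 : E.det = (∏ i, (x i + y 0)⁻¹) * F.det := by
      rw [show E = Matrix.of fun i j => (x i + y 0)⁻¹ * F i j by
        ext i j
        simp only [hE, hF, Matrix.of_apply]
        by_cases hj : j = 0 <;> simp [hj] <;> ring]
      exact Matrix.det_mul_column _ _
    set G : Matrix (Fin (n+1)) (Fin (n+1)) ℝ := Matrix.of fun i j =>
      if j = 0 then 1 else (x i + y j)⁻¹ with hG
    have h3 : F.det = (∏ j, if j = 0 then 1 else (y 0 - y j)) * G.det := by
      rw [show F = Matrix.of fun i j => (if j = 0 then (1:ℝ) else (y 0 - y j)) * G i j by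
        ext i j
        simp only [hF, hG, Matrix.of_apply]
        by_cases hj : j = 0 <;> simp [hj]]
      exact Matrix.det_mul_row _ _
    set H : Matrix (Fin (n+1)) (Fin (n+1)) ℝ := Matrix.of fun i j =>
      if i = 0 then G 0 j else G i j - G 0 j with hH
    have h4 : G.det = H.det := by
      apply Matrix.det_eq_of_forall_row_eq_smul_add_const
        (fun i => if i = 0 then (0:ℝ) else 1) 0 (by simp)
      intro i j
      by_cases hi : i = 0
      · simp [hH, hi]
      · simp [hH, hi]
    have h5 : H.det = (H.submatrix Fin.succ Fin.succ).det := by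
      rw [Matrix.det_succ_column_zero]
      rw [Fin.sum_univ_succ]
      have hH0 : ∀ i : Fin n, H i.succ 0 = 0 := by
        intro i
        simp [hH, hG, Fin.succ_ne_zero]
      simp only [hH0, mul_zero, zero_mul, Finset.sum_const_zero, add_zero]
      simp [hH, hG, Fin.succAbove_zero]
    have h6 : (H.submatrix Fin.succ Fin.succ) = Matrix.of fun (i j : Fin n) =>
        (x 0 - x i.succ) * ((x 0 + y j.succ)⁻¹ * ((x i.succ + y j.succ)⁻¹)) := by
      ext i j
      simp only [Matrix.submatrix_apply, hH, hG, Matrix.of_apply, Fin.succ_ne_zero, if_neg, reduceIte]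
      have ha := hne i.succ j.succ
      have hb := hne 0 j.succ
      field_simp
      ring
    have h7 : (H.submatrix Fin.succ Fin.succ).det =
        (∏ i : Fin n, (x 0 - x i.succ)) * ((∏ j : Fin n, (x 0 + y j.succ)⁻¹) *
          (Matrix.of fun (i j : Fin n) => (x i.succ + y j.succ)⁻¹).det) := by
      rw [h6]
      rw [show (Matrix.of fun (i j : Fin n) =>
          (x 0 - x i.succ) * ((x 0 + y j.succ)⁻¹ * (x i.succ + y j.succ)⁻¹)) =
          Matrix.of fun (i j : Fin n) => (x 0 - x i.succ) *
            ((Matrix.of fun (i j : Fin n) =>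
              (x 0 + y j.succ)⁻¹ * (x i.succ + y j.succ)⁻¹) i j) from rfl]
      rw [Matrix.det_mul_column]
      congr 1
      rw [show (Matrix.of fun (i j : Fin n) => (x 0 + y j.succ)⁻¹ * (x i.succ + y j.succ)⁻¹) =
          Matrix.of fun (i j : Fin n) => (fun j : Fin n => (x 0 + y j.succ)⁻¹) j *
            ((Matrix.of fun (i j : Fin n) => (x i.succ + y j.succ)⁻¹) i j) from rfl]
      rw [Matrix.det_mul_row]
    have h8 : 0 < ∏ i : Fin (n+1), (x i + y 0)⁻¹ :=
      Finset.prod_pos fun i _ => inv_pos.mpr (hxy i 0)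
    have ha : (∏ j : Fin (n+1), if j = 0 then (1:ℝ) else (y 0 - y j)) =
        ∏ j : Fin n, (y 0 - y j.succ) := by
      rw [Fin.prod_univ_succ]
      simp [Fin.succ_ne_zero]
    have h9 : 0 < (∏ j : Fin (n+1), if j = 0 then (1:ℝ) else (y 0 - y j)) *
        ∏ i : Fin n, (x 0 - x i.succ) := by
      rw [ha, ← Finset.prod_mul_distrib]
      refine Finset.prod_pos fun j _ => mul_pos_of_neg_of_neg ?_ ?_
      · exact sub_neg.mpr (hy (Fin.succ_pos j))
      · exact sub_neg.mpr (hx (Fin.succ_pos j))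
    have h10 : 0 < ∏ j : Fin n, (x 0 + y j.succ)⁻¹ :=
      Finset.prod_pos fun j _ => inv_pos.mpr (hxy 0 j.succ)
    have h11 : 0 < (Matrix.of fun (i j : Fin n) => (x i.succ + y j.succ)⁻¹).det :=
      ih _ _ (hx.comp Fin.strictMono_succ) (hy.comp Fin.strictMono_succ)
        (fun i j => hxy i.succ j.succ)
    rw [show C.det = (Matrix.of fun i j => (x i + y j)⁻¹).det from rfl] at h1 ⊢ <;> skip
    rw [h1, h2, h3, h4, h5, h7]
    rw [show (∏ j : Fin (n+1), if j = 0 then (1:ℝ) else (y 0 - y j)) *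
        ((∏ i : Fin n, (x 0 - x i.succ)) * ((∏ j : Fin n, (x 0 + y j.succ)⁻¹) *
          (Matrix.of fun (i j : Fin n) => (x i.succ + y j.succ)⁻¹).det)) =
        ((∏ j : Fin (n+1), if j = 0 then (1:ℝ) else (y 0 - y j)) *
          (∏ i : Fin n, (x 0 - x i.succ))) * ((∏ j : Fin n, (x 0 + y j.succ)⁻¹) *
          (Matrix.of fun (i j : Fin n) => (x i.succ + y j.succ)⁻¹).det) from by ring]
    exact mul_pos h8 (mul_pos h9 (mul_pos h10 h11))

/-- Our reference totally positive matrix. -/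
noncomputable def A0 (n : ℕ) : Matrix (Fin n) (Fin n) ℝ :=
  Matrix.of fun i j => (((i : ℕ) : ℝ) + (((j : ℕ) : ℝ) + 1))⁻¹

lemma A0_entry_pos {n : ℕ} (i j : Fin n) : 0 < A0 n i j := by
  have : (0:ℝ) < ((i : ℕ) : ℝ) + (((j : ℕ) : ℝ) + 1) := by positivity
  exact inv_pos.mpr this

lemma val_strictMono {n k : ℕ} {f : Fin k → Fin n} (hf : StrictMono f) :
    StrictMono fun a => (((f a : ℕ) : ℝ)) := fun a b h => by
  simp only []
  exact_mod_cast Fin.lt_iff_val_lt_val.mp (hf h)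

lemma scaled_TP {n : ℕ} (d e : Fin n → ℝ) (hd : ∀ i, 0 < d i) (he : ∀ j, 0 < e j) :
    TotallyPos (Matrix.of fun i j => d i * (e j * A0 n i j)) := by
  intro k f g hf hg
  have h1 : (Matrix.of fun i j => d i * (e j * A0 n i j)).submatrix f g =
      Matrix.of fun a b => d (f a) * ((Matrix.of fun (a b : Fin k) =>
        e (g b) * A0 n (f a) (g b)) a b) := rfl
  rw [h1, Matrix.det_mul_column]
  have h2 : (Matrix.of fun (a b : Fin k) => e (g b) * A0 n (f a) (g b)) =
      Matrix.of fun a b => (fun b : Fin k => e (g b)) b *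
        ((Matrix.of fun (a b : Fin k) => A0 n (f a) (g b)) a b) := rfl
  rw [h2, Matrix.det_mul_row]
  have h3 : (Matrix.of fun (a b : Fin k) => A0 n (f a) (g b)) =
      Matrix.of fun a b => ((fun a => ((f a : ℕ) : ℝ)) a + (fun b => ((g b : ℕ) : ℝ) + 1) b)⁻¹ :=
    rfl
  have hdet : 0 < (Matrix.of fun (a b : Fin k) => A0 n (f a) (g b)).det := by
    rw [h3]
    refine cauchy_det_pos k _ _ (val_strictMono hf) (fun a b h => ?_) (fun i j => by positivity)
    have := Fin.lt_iff_val_lt_val.mp (hg h)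
    simp only [add_lt_add_iff_right]
    exact_mod_cast this
  have hd' : 0 < ∏ a, d (f a) := Finset.prod_pos fun a _ => hd (f a)
  have he' : 0 < ∏ b, e (g b) := Finset.prod_pos fun b _ => he (g b)
  exact mul_pos hd' (mul_pos he' hdet)

lemma per_scale {r : ℕ} (u v : Fin r → ℝ) (M : Matrix (Fin r) (Fin r) ℝ) :
    per (Matrix.of fun a b => u a * (v b * M a b)) = (∏ a, u a) * ((∏ b, v b) * per M) := by
  unfold per
  rw [Finset.mul_sum, Finset.mul_sum]
  refine Finset.sum_congr rfl fun σ _ => ?_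
  simp only [Matrix.of_apply]
  rw [show ∀ z, (∏ b, v b) * z = (∏ a, v (σ a)) * z from fun z => by
    rw [Equiv.prod_comp σ v]]
  rw [← Finset.prod_mul_distrib, ← Finset.prod_mul_distrib]

lemma per_pos {r : ℕ} (M : Matrix (Fin r) (Fin r) ℝ) (h : ∀ a b, 0 < M a b) : 0 < per M :=
  Finset.sum_pos (fun σ _ => Finset.prod_pos fun a _ => h a (σ a)) Finset.univ_nonempty

lemma pow_bound_eq {a b : ℕ} {P Q C : ℝ} (hP : 0 < P) (hQ : 0 < Q)
    (h : ∀ t : ℝ, 0 < t → t ^ a * P ≤ C * (t ^ b * Q)) : a = b := by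
  have h1 := h 1 one_pos
  simp only [one_pow, one_mul] at h1
  have hC : 0 < C := by nlinarith
  rcases lt_trichotomy a b with hab | hab | hab
  · exfalso
    set t := min 1 (P / (2 * C * Q)) with ht
    have ht0 : 0 < t := lt_min one_pos (by positivity)
    have ht1 : t ≤ 1 := min_le_left _ _
    have h2 : t ^ b ≤ t ^ (a + 1) :=
      pow_le_pow_of_le_one ht0.le ht1 (Nat.succ_le_of_lt hab)
    have h3 := h t ht0
    have h4 : t ^ a * P ≤ C * (t ^ (a + 1) * Q) := by
      refine h3.trans ?_
      have := mul_le_mul_of_nonneg_right h2 hQ.le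
      nlinarith
    have h5 : P ≤ C * (t * Q) := by
      have hpa : 0 < t ^ a := pow_pos ht0 a
      rw [pow_succ] at h4
      have : t ^ a * P ≤ t ^ a * (C * (t * Q)) := by nlinarith
      exact le_of_mul_le_mul_left this hpa
    have h6 : t ≤ P / (2 * C * Q) := min_le_right _ _
    have h7 : C * (t * Q) ≤ C * ((P / (2 * C * Q)) * Q) := by nlinarith
    have h8 : C * ((P / (2 * C * Q)) * Q) = P / 2 := by
      field_simp
    nlinarith
  · exact hab
  · exfalso
    set t := C * Q / P + 1 with ht
    have hcqp : 0 < C * Q / P := by positivity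
    have ht1 : (1:ℝ) ≤ t := by simp only [ht]; linarith
    have ht0 : 0 < t := lt_of_lt_of_le one_pos ht1
    have h2 : t ^ (b + 1) ≤ t ^ a := pow_le_pow_right₀ ht1 (Nat.succ_le_of_lt hab)
    have h3 := h t ht0
    have h4 : t ^ (b + 1) * P ≤ C * (t ^ b * Q) := by nlinarith [pow_pos ht0 (b+1), pow_pos ht0 a]
    have h5 : t * P ≤ C * Q := by
      have hpb : 0 < t ^ b := pow_pos ht0 b
      rw [pow_succ] at h4
      have : t ^ b * (t * P) ≤ t ^ b * (C * Q) := by nlinarith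
      exact le_of_mul_le_mul_left this hpb
    have : t * P = C * Q + P := by
      rw [ht]
      field_simp
    nlinarith

lemma pow_bound_eq' {a b : ℕ} {P Q : ℝ} (hP : 0 < P) (hQ : 0 < Q)
    (h : (∃ C : ℝ, ∀ t : ℝ, 0 < t → t ^ a * P ≤ C * (t ^ b * Q)) ∨
         (∃ c : ℝ, 0 < c ∧ ∀ t : ℝ, 0 < t → c * (t ^ b * Q) ≤ t ^ a * P)) : a = b := by
  rcases h with ⟨C, hC⟩ | ⟨c, hc0, hc⟩
  · exact pow_bound_eq hP hQ hC
  · refine (pow_bound_eq hQ hP (C := c⁻¹) fun t ht => ?_).symm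
    have := hc t ht
    rw [← sub_nonneg] at this ⊢
    have hci : 0 < c⁻¹ := inv_pos.mpr hc0
    have h2 := mul_nonneg hci.le this
    have h4 : c⁻¹ * (t ^ a * P - c * (t ^ b * Q)) = c⁻¹ * (t ^ a * P) - t ^ b * Q := by
      rw [mul_sub]
      congr 1
      rw [← mul_assoc, inv_mul_cancel₀ hc0.ne', one_mul]
    rw [h4] at h2
    exact h2

lemma per_submatrix_scale {n k : ℕ} (u v : Fin n → ℝ) (A : Matrix (Fin n) (Fin n) ℝ)
    (M O : Fin k → Fin n) :
    per ((Matrix.of fun i j => u i * (v j * A i j)).submatrix M O) =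
      (∏ a, u (M a)) * ((∏ b, v (O b)) * per (A.submatrix M O)) := by
  rw [show (Matrix.of fun i j => u i * (v j * A i j)).submatrix M O =
      Matrix.of fun a b => u (M a) * (v (O b) * (A.submatrix M O) a b) from rfl]
  exact per_scale _ _ _

lemma prod_ite_pow {m : ℕ} {n : ℕ} (f : Fin m → Fin n) (i₀ : Fin n) (t : ℝ) :
    (∏ a, if f a = i₀ then t else 1) =
      t ^ (Finset.univ.filter fun l => f l = i₀).card := by
  rw [Finset.prod_ite, Finset.prod_const, Finset.prod_const_one, mul_one]

lemma prod_per_rowscale {n r : ℕ} {lI : Fin r → ℕ} (I I' : ∀ k : Fin r, Fin (lI k) → Fin n)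
    (i₀ : Fin n) (t : ℝ) :
    (∏ k, per ((Matrix.of fun i j : Fin n =>
        (if i = i₀ then t else 1) * ((1:ℝ) * A0 n i j)).submatrix (I k) (I' k))) =
      t ^ (∑ k, (Finset.univ.filter fun l => I k l = i₀).card) *
        ∏ k, per ((A0 n).submatrix (I k) (I' k)) := by
  have h1 : ∀ k, per ((Matrix.of fun i j : Fin n =>
      (if i = i₀ then t else 1) * ((1:ℝ) * A0 n i j)).submatrix (I k) (I' k)) =
      t ^ ((Finset.univ.filter fun l => I k l = i₀).card) *
        per ((A0 n).submatrix (I k) (I' k)) := by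
    intro k
    rw [per_submatrix_scale (fun i => if i = i₀ then t else 1) (fun _ => (1:ℝ)) (A0 n)]
    rw [prod_ite_pow, Finset.prod_const_one, one_mul]
  rw [Finset.prod_congr rfl fun k _ => h1 k, Finset.prod_mul_distrib,
    Finset.prod_pow_eq_pow_sum]

lemma prod_per_colscale {n r : ℕ} {lI : Fin r → ℕ} (I I' : ∀ k : Fin r, Fin (lI k) → Fin n)
    (i₀ : Fin n) (t : ℝ) :
    (∏ k, per ((Matrix.of fun i j : Fin n =>
        (1:ℝ) * ((if j = i₀ then t else 1) * A0 n i j)).submatrix (I k) (I' k))) =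
      t ^ (∑ k, (Finset.univ.filter fun l => I' k l = i₀).card) *
        ∏ k, per ((A0 n).submatrix (I k) (I' k)) := by
  have h1 : ∀ k, per ((Matrix.of fun i j : Fin n =>
      (1:ℝ) * ((if j = i₀ then t else 1) * A0 n i j)).submatrix (I k) (I' k)) =
      t ^ ((Finset.univ.filter fun l => I' k l = i₀).card) *
        per ((A0 n).submatrix (I k) (I' k)) := by
    intro k
    rw [per_submatrix_scale (fun _ => (1:ℝ)) (fun j => if j = i₀ then t else 1) (A0 n)]
    rw [prod_ite_pow, Finset.prod_const_one, one_mul]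
  rw [Finset.prod_congr rfl fun k _ => h1 k, Finset.prod_mul_distrib,
    Finset.prod_pow_eq_pow_sum]

theorem stmt4 (n r q : ℕ) (lI : Fin r → ℕ) (lJ : Fin q → ℕ)
    (I I' : (k : Fin r) → Fin (lI k) → Fin n)
    (J J' : (k : Fin q) → Fin (lJ k) → Fin n)
    (hI : ∀ k, Monotone (I k)) (hI' : ∀ k, Monotone (I' k))
    (hJ : ∀ k, Monotone (J k)) (hJ' : ∀ k, Monotone (J' k))
    (hbound :
      (∃ B : ℝ, ∀ A : Matrix (Fin n) (Fin n) ℝ, TotallyPos A →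
        (∏ k, per (A.submatrix (I k) (I' k))) ≤
          B * ∏ k, per (A.submatrix (J k) (J' k))) ∨
      (∃ b : ℝ, 0 < b ∧ ∀ A : Matrix (Fin n) (Fin n) ℝ, TotallyPos A →
        b * (∏ k, per (A.submatrix (J k) (J' k))) ≤
          ∏ k, per (A.submatrix (I k) (I' k)))) :
    ∀ i : Fin n,
      ((∑ k, (Finset.univ.filter fun l => I k l = i).card) =
        ∑ k, (Finset.univ.filter fun l => J k l = i).card) ∧
      ((∑ k, (Finset.univ.filter fun l => I' k l = i).card) =
        ∑ k, (Finset.univ.filter fun l => J' k l = i).card) := by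
  intro i₀
  have hPI : 0 < ∏ k, per ((A0 n).submatrix (I k) (I' k)) :=
    Finset.prod_pos fun k _ => per_pos _ fun a b => A0_entry_pos _ _
  have hPJ : 0 < ∏ k, per ((A0 n).submatrix (J k) (J' k)) :=
    Finset.prod_pos fun k _ => per_pos _ fun a b => A0_entry_pos _ _
  constructor
  · refine pow_bound_eq' hPI hPJ ?_
    have hTP : ∀ t : ℝ, 0 < t → TotallyPos (Matrix.of fun i j : Fin n =>
        (if i = i₀ then t else 1) * ((1:ℝ) * A0 n i j)) := by
      intro t ht
      refine scaled_TP _ _ (fun i => ?_) (fun _ => one_pos)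
      split
      · exact ht
      · exact one_pos
    rcases hbound with ⟨B, hB⟩ | ⟨b, hb0, hb⟩
    · left
      refine ⟨B, fun t ht => ?_⟩
      have h := hB _ (hTP t ht)
      rwa [prod_per_rowscale I I' i₀ t, prod_per_rowscale J J' i₀ t] at h
    · right
      refine ⟨b, hb0, fun t ht => ?_⟩
      have h := hb _ (hTP t ht)
      rwa [prod_per_rowscale I I' i₀ t, prod_per_rowscale J J' i₀ t] at h
  · refine pow_bound_eq' hPI hPJ ?_
    have hTP : ∀ t : ℝ, 0 < t → TotallyPos (Matrix.of fun i j : Fin n =>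
        (1:ℝ) * ((if j = i₀ then t else 1) * A0 n i j)) := by
      intro t ht
      refine scaled_TP _ _ (fun _ => one_pos) (fun j => ?_)
      split
      · exact ht
      · exact one_pos
    rcases hbound with ⟨B, hB⟩ | ⟨b, hb0, hb⟩
    · left
      refine ⟨B, fun t ht => ?_⟩
      have h := hB _ (hTP t ht)
      rwa [prod_per_colscale I I' i₀ t, prod_per_colscale J J' i₀ t] at h
    · right
      refine ⟨b, hb0, fun t ht => ?_⟩
      have h := hb _ (hTP t ht)
      rwa [prod_per_colscale I I' i₀ t, prod_per_colscale J J' i₀ t] at h
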